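/- arXiv:2506.22415 — 3 statements merged into one kernel-verified Lean document; each statement's English description precedes it below -/
import Mathlib

section
/- Let μ ∈ ℕⁿ and ν ∈ ℕᵐ be multi-indices, and for a multi-index α write x^{[α]} := x^α / α! (with α! = ∏ᵢ αᵢ!). Let T be a homogeneous linear operator from the span of the monomials {x^α : α ≤ μ componentwise} in ℝ[x₁,…,xₙ] to the span of {y^β : β ≤ ν componentwise} in ℝ[y₁,…,y_m], and define coefficients c_{α,β} ∈ ℝ by T(x^{[α]}) = Σ_{β ≤ ν} c_{α,β} y^{[β]}. Define the cosymbol of T as the constant-coefficient differential operator cosym_T := Σ_{α ≤ μ, β ≤ ν} c_{α,β} ∂^α δ^{ν−β}, where ∂ᵢ = ∂/∂xᵢ and δⱼ = ∂/∂yⱼ. Then for every f in the span of {x^α : α ≤ μ}, applying cosym_T to the polynomial f(x)·y^{[ν]} ∈ ℝ[x₁,…,xₙ,y₁,…,y_m] and then setting x₁ = ⋯ = xₙ = 0 yields exactly T(f) ∈ ℝ[y₁,…,y_m]. -/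
open MvPolynomial

/-- The normalized monomial `x^{[e]} = x^e / e!`, where `e! = ∏ i, (e i)!`. -/
noncomputable def nmon {σ : Type*} [Fintype σ] (e : σ → ℕ) : MvPolynomial σ ℝ :=
  ((∏ i, Nat.factorial (e i) : ℕ) : ℝ)⁻¹ •
    monomial (Finsupp.equivFunOnFinite.symm e) (1 : ℝ)

/-- The constant-coefficient differential operator `∂^e`: for each variable `i`, the
partial derivative in the variable `i` iterated `e i` times. -/
noncomputable def diffOp {σ : Type*} [Fintype σ] [DecidableEq σ] (e : σ → ℕ)
    (p : MvPolynomial σ ℝ) : MvPolynomial σ ℝ :=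
  Finset.univ.toList.foldr (fun i q => (fun r => pderiv i r)^[e i] q) p

section aux
variable {σ : Type*} [Fintype σ] [DecidableEq σ]

lemma factProd_ne (e : σ → ℕ) : ((∏ i, Nat.factorial (e i) : ℕ) : ℝ) ≠ 0 :=
  Nat.cast_ne_zero.mpr (Finset.prod_ne_zero_iff.mpr fun i _ => (e i).factorial_ne_zero)

lemma fact_smul_nmon (e : σ → ℕ) :
    ((∏ i, Nat.factorial (e i) : ℕ) : ℝ) • nmon e
      = monomial (Finsupp.equivFunOnFinite.symm e) (1 : ℝ) := by
  rw [nmon, smul_smul, mul_inv_cancel₀ (factProd_ne e), one_smul]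

lemma pderiv_nmon (i : σ) (d : σ → ℕ) :
    pderiv i (nmon d) = if d i = 0 then 0 else nmon (Function.update d i (d i - 1)) := by
  rw [nmon, Derivation.map_smul, pderiv_monomial]
  split_ifs with h
  · simp [h]
  · have hsub : (Finsupp.equivFunOnFinite.symm d - fun₀ | i => 1) =
        Finsupp.equivFunOnFinite.symm (Function.update d i (d i - 1)) := by
      ext j
      rw [Finsupp.tsub_apply]
      by_cases hj : j = i
      · subst hj; simp
      · simp [Finsupp.single_apply, Function.update, hj, Ne.symm hj]
    have hval : ((Finsupp.equivFunOnFinite.symm d) i : ℝ) = (d i : ℝ) := by simp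
    rw [hsub]
    have : (monomial (Finsupp.equivFunOnFinite.symm (Function.update d i (d i - 1))))
        ((1:ℝ) * ((Finsupp.equivFunOnFinite.symm d) i : ℕ)) =
        ((d i : ℕ) : ℝ) • (monomial (Finsupp.equivFunOnFinite.symm (Function.update d i (d i - 1))) (1:ℝ)) := by
      rw [one_mul, ← map_smul, smul_eq_mul, mul_one]
      norm_num
    rw [this, nmon, smul_smul]
    congr 1
    have hnat : (∏ j, Nat.factorial (d j)) =
        d i * ∏ j, Nat.factorial (Function.update d i (d i - 1) j) := by
      rw [← Finset.mul_prod_erase Finset.univ _ (Finset.mem_univ i),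
        ← Finset.mul_prod_erase Finset.univ (fun j => Nat.factorial (Function.update d i (d i - 1) j)) (Finset.mem_univ i)]
      have h2 : ∀ j ∈ Finset.univ.erase i, Nat.factorial (Function.update d i (d i - 1) j)
          = Nat.factorial (d j) := by
        intro j hj
        rw [Function.update_of_ne (Finset.mem_erase.mp hj).1]
      rw [Finset.prod_congr rfl h2, Function.update_self, ← mul_assoc,
        Nat.mul_factorial_pred h]
    have h1 := factProd_ne d
    have h2 := factProd_ne (Function.update d i (d i - 1))
    field_simp
    exact_mod_cast hnat.symm
end aux

section aux2
variable {σ : Type*} [Fintype σ] [DecidableEq σ]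

open Classical in
lemma iterate_pderiv_nmon (i : σ) (k : ℕ) (d : σ → ℕ) :
    (fun r => pderiv i r)^[k] (nmon d) =
      if k ≤ d i then nmon (Function.update d i (d i - k)) else 0 := by
  induction k with
  | zero => simp
  | succ k ih =>
    rw [Function.iterate_succ_apply', ih]
    by_cases h1 : k ≤ d i
    · rw [if_pos h1]
      beta_reduce
      rw [pderiv_nmon]
      by_cases h2 : k + 1 ≤ d i
      · rw [if_pos h2, if_neg (by simp; omega)]
        rw [Function.update_idem, Function.update_self]
        have he : d i - k - 1 = d i - (k + 1) := by omega
        rw [he]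
      · rw [if_neg h2, if_pos (by simp; omega)]
    · rw [if_neg h1, if_neg (by omega)]
      exact map_zero (pderiv i)

open Classical in
lemma foldr_pderiv_nmon (e d : σ → ℕ) :
    ∀ l : List σ, l.Nodup →
      l.foldr (fun i q => (fun r => pderiv i r)^[e i] q) (nmon d) =
      if ∀ i ∈ l, e i ≤ d i then nmon (fun j => if j ∈ l then d j - e j else d j)
      else 0 := by
  intro l
  induction l with
  | nil => simp
  | cons a l ih =>
    intro hnd
    rw [List.nodup_cons] at hnd
    rw [List.foldr_cons, ih hnd.2]
    by_cases hl : ∀ i ∈ l, e i ≤ d i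
    · rw [if_pos hl, iterate_pderiv_nmon]
      simp only [if_neg hnd.1]
      by_cases ha : e a ≤ d a
      · rw [if_pos ha, if_pos (by
          intro i hi
          rcases List.mem_cons.mp hi with h | h
          · subst h; exact ha
          · exact hl i h)]
        congr 1
        funext j
        by_cases hja : j = a
        · subst hja
          simp [Function.update_self, hnd.1]
        · simp only [Function.update_of_ne hja, List.mem_cons, hja, false_or]
      · rw [if_neg ha, if_neg (by
          intro hcon
          exact ha (hcon a (List.mem_cons_self (a := a) (l := l))))]
    · rw [if_neg hl, if_neg (by
        intro hcon
        exact hl fun i hi => hcon i (List.mem_cons_of_mem a hi))]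
      exact Function.iterate_fixed (map_zero (pderiv a)) (e a)

open Classical in
lemma diffOp_nmon (e d : σ → ℕ) :
    diffOp e (nmon d) = if e ≤ d then nmon (d - e) else 0 := by
  rw [diffOp, foldr_pderiv_nmon e d _ Finset.univ.nodup_toList]
  have h1 : (∀ i ∈ Finset.univ.toList, e i ≤ d i) ↔ e ≤ d := by
    simp [Pi.le_def, Finset.mem_toList]
  have h2 : (fun j => if j ∈ Finset.univ.toList then d j - e j else d j) = d - e := by
    funext j
    simp [Finset.mem_toList, Pi.sub_apply]
  rw [h2]
  by_cases hc : e ≤ d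
  · rw [if_pos (h1.mpr hc), if_pos hc]
  · rw [if_neg (fun h => hc (h1.mp h)), if_neg hc]

noncomputable def diffOpL (e : σ → ℕ) : MvPolynomial σ ℝ →ₗ[ℝ] MvPolynomial σ ℝ :=
  Finset.univ.toList.foldr
    (fun i (g : MvPolynomial σ ℝ →ₗ[ℝ] MvPolynomial σ ℝ) =>
      ((pderiv (R := ℝ) i).toLinearMap ^ e i) ∘ₗ g)
    LinearMap.id

lemma diffOp_eq_L (e : σ → ℕ) (p : MvPolynomial σ ℝ) : diffOp e p = diffOpL e p := by
  rw [diffOp, diffOpL]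
  generalize (Finset.univ : Finset σ).toList = l
  induction l with
  | nil => rfl
  | cons a l ih =>
    rw [List.foldr_cons, List.foldr_cons, LinearMap.comp_apply, ← ih, Module.End.pow_apply]
    rfl

lemma diffOp_add (e : σ → ℕ) (p q : MvPolynomial σ ℝ) :
    diffOp e (p + q) = diffOp e p + diffOp e q := by
  simp [diffOp_eq_L, map_add]

lemma diffOp_smul (e : σ → ℕ) (r : ℝ) (p : MvPolynomial σ ℝ) :
    diffOp e (r • p) = r • diffOp e p := by
  simp [diffOp_eq_L, map_smul]

end aux2

section aux3
variable {n m : ℕ}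

open Classical in
lemma aeval_elim_nmon (a : Fin n → ℕ) (b : Fin m → ℕ) :
    aeval (Sum.elim (fun _ => (0 : MvPolynomial (Fin m) ℝ)) (fun j => X j))
      (nmon (Sum.elim a b)) = if a = 0 then nmon b else 0 := by
  rw [nmon, map_smul, aeval_monomial, map_one, one_mul,
    Finsupp.prod_fintype _ _ (fun i => pow_zero _)]
  simp only [Finsupp.coe_equivFunOnFinite_symm]
  have hsplit : (∏ x : Fin n ⊕ Fin m,
      (Sum.elim (fun _ => (0 : MvPolynomial (Fin m) ℝ)) (fun j => X j) x) ^ (Sum.elim a b x))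
      = (∏ i : Fin n, (0 : MvPolynomial (Fin m) ℝ) ^ a i)
        * ∏ j : Fin m, (X j : MvPolynomial (Fin m) ℝ) ^ b j := by
    rw [Fintype.prod_sum_type]
    simp
  rw [hsplit]
  by_cases ha : a = 0
  · rw [if_pos ha]
    subst ha
    simp only [Pi.zero_apply, pow_zero, Finset.prod_const_one, one_mul]
    have hc : (∏ i : Fin n ⊕ Fin m, Nat.factorial (Sum.elim (0 : Fin n → ℕ) b i))
        = ∏ j : Fin m, Nat.factorial (b j) := by
      rw [Fintype.prod_sum_type]
      simp
    rw [hc, nmon]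
    congr 1
    rw [monomial_eq, C_1, one_mul, Finsupp.prod_fintype _ _ (fun i => pow_zero _)]
    simp
  · rw [if_neg ha]
    obtain ⟨i, hi⟩ : ∃ i, a i ≠ 0 := by
      by_contra hcon
      push_neg at hcon
      exact ha (funext hcon)
    rw [Finset.prod_eq_zero (Finset.mem_univ i) (zero_pow hi), zero_mul, smul_zero]

lemma rename_nmon_mul (γ : Fin n → ℕ) (ν : Fin m → ℕ) :
    rename Sum.inl (nmon γ) * nmon (Sum.elim (fun _ => 0) ν : Fin n ⊕ Fin m → ℕ)
      = nmon (Sum.elim γ ν) := by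
  rw [nmon, nmon, nmon, map_smul, rename_monomial, smul_mul_smul_comm, monomial_mul, mul_one]
  have hs : Finsupp.mapDomain Sum.inl (Finsupp.equivFunOnFinite.symm γ) +
      Finsupp.equivFunOnFinite.symm (Sum.elim (fun _ => 0) ν : Fin n ⊕ Fin m → ℕ)
      = Finsupp.equivFunOnFinite.symm (Sum.elim γ ν) := by
    ext x
    rw [Finsupp.add_apply]
    cases x with
    | inl i =>
      rw [Finsupp.mapDomain_apply Sum.inl_injective]
      simp
    | inr j =>
      rw [Finsupp.mapDomain_notin_range _ _ (by simp)]
      simp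
  rw [hs]
  congr 1
  rw [← mul_inv]
  congr 1
  rw [← Nat.cast_mul]
  congr 1
  rw [Fintype.prod_sum_type]
  simp

lemma span_decomp (ν : Fin m → ℕ) (p : MvPolynomial (Fin m) ℝ)
    (hp : ∀ β : Fin m → ℕ, ¬ β ≤ ν → coeff (Finsupp.equivFunOnFinite.symm β) p = 0) :
    p = ∑ β ∈ Finset.Iic ν, coeff (Finsupp.equivFunOnFinite.symm β) p •
        monomial (Finsupp.equivFunOnFinite.symm β) (1 : ℝ) := by
  ext d
  rw [coeff_sum]
  simp only [coeff_smul, coeff_monomial, smul_eq_mul, mul_ite, mul_one, mul_zero]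
  have h1 : ∀ β ∈ Finset.Iic ν,
      (if Finsupp.equivFunOnFinite.symm β = d then
          coeff (Finsupp.equivFunOnFinite.symm β) p else 0)
      = if β = Finsupp.equivFunOnFinite d then coeff d p else 0 := by
    intro β _
    by_cases h : β = Finsupp.equivFunOnFinite d
    · subst h
      simp [Equiv.symm_apply_apply]
    · rw [if_neg h, if_neg fun hc => h (by rw [← hc]; simp)]
  rw [Finset.sum_congr rfl h1, Finset.sum_ite_eq']
  split_ifs with h
  · rfl
  · have h2 := hp (Finsupp.equivFunOnFinite d) fun hc => h (Finset.mem_Iic.mpr hc)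
    rw [Equiv.symm_apply_apply] at h2
    exact h2

end aux3

noncomputable def Phi {n m : ℕ} (μ : Fin n → ℕ) (ν : Fin m → ℕ)
    (T : MvPolynomial (Fin n) ℝ →ₗ[ℝ] MvPolynomial (Fin m) ℝ) :
    MvPolynomial (Fin n) ℝ →ₗ[ℝ] MvPolynomial (Fin m) ℝ where
  toFun p :=
    aeval (Sum.elim (fun _ => (0 : MvPolynomial (Fin m) ℝ)) (fun j => X j))
      (∑ α ∈ Finset.Iic μ, ∑ β ∈ Finset.Iic ν,
        (((∏ j, Nat.factorial (β j) : ℕ) : ℝ) *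
            coeff (Finsupp.equivFunOnFinite.symm β) (T (nmon α))) •
          diffOp (Sum.elim α (fun j => ν j - β j))
            ((rename Sum.inl p) * nmon (Sum.elim (fun _ => 0) ν : Fin n ⊕ Fin m → ℕ)))
  map_add' p q := by
    simp only [map_add, add_mul, diffOp_add, smul_add, Finset.sum_add_distrib]
  map_smul' r p := by
    simp only [map_smul, smul_mul_assoc, diffOp_smul, RingHom.id_apply]
    simp only [smul_smul, mul_comm _ r]
    simp only [← smul_smul, ← Finset.smul_sum, map_smul]

lemma Phi_apply {n m : ℕ} (μ : Fin n → ℕ) (ν : Fin m → ℕ)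
    (T : MvPolynomial (Fin n) ℝ →ₗ[ℝ] MvPolynomial (Fin m) ℝ)
    (p : MvPolynomial (Fin n) ℝ) :
    Phi μ ν T p =
    aeval (Sum.elim (fun _ => (0 : MvPolynomial (Fin m) ℝ)) (fun j => X j))
      (∑ α ∈ Finset.Iic μ, ∑ β ∈ Finset.Iic ν,
        (((∏ j, Nat.factorial (β j) : ℕ) : ℝ) *
            coeff (Finsupp.equivFunOnFinite.symm β) (T (nmon α))) •
          diffOp (Sum.elim α (fun j => ν j - β j))
            ((rename Sum.inl p) * nmon (Sum.elim (fun _ => 0) ν : Fin n ⊕ Fin m → ℕ))) := rfl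

lemma Phi_nmon {n m : ℕ} (μ : Fin n → ℕ) (ν : Fin m → ℕ)
    (T : MvPolynomial (Fin n) ℝ →ₗ[ℝ] MvPolynomial (Fin m) ℝ)
    (hT : ∀ α : Fin n → ℕ, α ≤ μ → ∀ β : Fin m → ℕ, ¬ β ≤ ν →
      coeff (Finsupp.equivFunOnFinite.symm β) (T (nmon α)) = 0)
    (γ : Fin n → ℕ) (hγ : γ ∈ Finset.Iic μ) :
    Phi μ ν T (nmon γ) = T (nmon γ) := by
  classical
  rw [Phi_apply, map_sum]
  have hterm : ∀ α ∈ Finset.Iic μ,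
      aeval (Sum.elim (fun _ => (0 : MvPolynomial (Fin m) ℝ)) (fun j => X j))
        (∑ β ∈ Finset.Iic ν,
          (((∏ j, Nat.factorial (β j) : ℕ) : ℝ) *
              coeff (Finsupp.equivFunOnFinite.symm β) (T (nmon α))) •
            diffOp (Sum.elim α (fun j => ν j - β j))
              ((rename Sum.inl (nmon γ)) * nmon (Sum.elim (fun _ => 0) ν : Fin n ⊕ Fin m → ℕ)))
      = if α = γ then
          ∑ β ∈ Finset.Iic ν,
            (((∏ j, Nat.factorial (β j) : ℕ) : ℝ) *
                coeff (Finsupp.equivFunOnFinite.symm β) (T (nmon α))) • nmon β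
        else 0 := by
    intro α hα
    rw [map_sum]
    have hβterm : ∀ β ∈ Finset.Iic ν,
        aeval (Sum.elim (fun _ => (0 : MvPolynomial (Fin m) ℝ)) (fun j => X j))
          ((((∏ j, Nat.factorial (β j) : ℕ) : ℝ) *
              coeff (Finsupp.equivFunOnFinite.symm β) (T (nmon α))) •
            diffOp (Sum.elim α (fun j => ν j - β j))
              ((rename Sum.inl (nmon γ)) * nmon (Sum.elim (fun _ => 0) ν : Fin n ⊕ Fin m → ℕ)))
        = if α = γ then
            (((∏ j, Nat.factorial (β j) : ℕ) : ℝ) *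
                coeff (Finsupp.equivFunOnFinite.symm β) (T (nmon α))) • nmon β
          else 0 := by
      intro β hβ
      have hβν : β ≤ ν := Finset.mem_Iic.mp hβ
      rw [rename_nmon_mul, map_smul, diffOp_nmon]
      by_cases hle : Sum.elim α (fun j => ν j - β j) ≤ Sum.elim γ ν
      · rw [if_pos hle]
        have hαγ : α ≤ γ := fun i => hle (Sum.inl i)
        have hdiff : (Sum.elim γ ν - Sum.elim α fun j => ν j - β j)
            = Sum.elim (γ - α) β := by
          funext x
          cases x with
          | inl i => rfl
          | inr j =>
            have hj : β j ≤ ν j := hβν j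
            show ν j - (ν j - β j) = β j
            omega
        rw [hdiff, aeval_elim_nmon]
        by_cases heq : α = γ
        · subst heq
          rw [if_pos (by funext i; exact Nat.sub_self _), if_pos rfl]
        · rw [if_neg (fun h0 => heq (le_antisymm hαγ fun i => by
            have h2 : γ i - α i = 0 := by
              have h3 := congrFun h0 i
              simpa [Pi.sub_apply] using h3
            exact Nat.le_of_sub_eq_zero h2)), smul_zero, if_neg heq]
      · have hne : α ≠ γ := by
          intro heq
          subst heq
          exact hle fun x => by
            cases x with
            | inl i => exact le_refl _
            | inr j => exact Nat.sub_le _ _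
        rw [if_neg hle, map_zero, smul_zero, if_neg hne]
    rw [Finset.sum_congr rfl hβterm]
    by_cases h : α = γ
    · subst h
      simp
    · simp only [if_neg h, Finset.sum_const_zero]
  rw [Finset.sum_congr rfl hterm, Finset.sum_ite_eq', if_pos hγ]
  conv_rhs => rw [span_decomp ν (T (nmon γ)) (hT γ (Finset.mem_Iic.mp hγ))]
  refine Finset.sum_congr rfl fun β _ => ?_
  rw [mul_comm, mul_smul, fact_smul_nmon]


/-- **The cosymbol formula.**  Let `T` be a homogeneous linear operator from the span of the
monomials `x^α`, `α ≤ μ`, to the span of the monomials `y^β`, `β ≤ ν`, and write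
`T (x^{[α]}) = ∑_{β ≤ ν} c (α, β) y^{[β]}` (so `c (α, β) = β! ⬝ coeff_β (T x^{[α]})`).
Then for every `f` in the span of the `x^α` with `α ≤ μ`, applying the cosymbol
`cosym_T = ∑_{α ≤ μ, β ≤ ν} c (α, β) ∂^α δ^{ν - β}` to `f(x) ⬝ y^{[ν]}` and then setting
all the `x`-variables to `0` yields exactly `T f`. -/
theorem cosymbol_apply_eq
    (n m : ℕ) (μ : Fin n → ℕ) (ν : Fin m → ℕ)
    (T : MvPolynomial (Fin n) ℝ →ₗ[ℝ] MvPolynomial (Fin m) ℝ)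
    (hT : ∀ α : Fin n → ℕ, α ≤ μ → ∀ β : Fin m → ℕ, ¬ β ≤ ν →
      coeff (Finsupp.equivFunOnFinite.symm β) (T (nmon α)) = 0)
    (hhom : ∃ e : ℤ, ∀ α : Fin n → ℕ, α ≤ μ → ∀ β : Fin m →₀ ℕ,
      coeff β (T (nmon α)) ≠ 0 → ((∑ j, β j : ℕ) : ℤ) = (∑ i, α i : ℤ) + e)
    (f : MvPolynomial (Fin n) ℝ)
    (hf : ∀ γ : Fin n → ℕ, ¬ γ ≤ μ → coeff (Finsupp.equivFunOnFinite.symm γ) f = 0) :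
    aeval (Sum.elim (fun _ => (0 : MvPolynomial (Fin m) ℝ)) (fun j => X j))
      (∑ α ∈ Finset.Iic μ, ∑ β ∈ Finset.Iic ν,
        (((∏ j, Nat.factorial (β j) : ℕ) : ℝ) *
            coeff (Finsupp.equivFunOnFinite.symm β) (T (nmon α))) •
          diffOp (Sum.elim α (fun j => ν j - β j))
            ((rename Sum.inl f) * nmon (Sum.elim (fun _ => 0) ν : Fin n ⊕ Fin m → ℕ)))
      = T f := by
    classical
  rw [← Phi_apply μ ν T f]
  have hfd : f = ∑ γ ∈ Finset.Iic μ,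
      (((∏ i, Nat.factorial (γ i) : ℕ) : ℝ) *
        coeff (Finsupp.equivFunOnFinite.symm γ) f) • nmon γ := by
    conv_lhs => rw [span_decomp μ f hf]
    refine Finset.sum_congr rfl fun γ _ => ?_
    rw [mul_comm, mul_smul, fact_smul_nmon]
  rw [hfd, map_sum, map_sum]
  exact Finset.sum_congr rfl fun γ hγ => by
    rw [map_smul, map_smul, Phi_nmon μ ν T hT γ hγ]
end

section
/- Let a, b, c be nonnegative real numbers. Then the following are equivalent: (1) b² ≥ ac; (2) for every integer d ≥ 4 and every sequence (d_0, d_1, …, d_d) of nonnegative real numbers that is log-concave and has no internal zeros, the sequence (e_0, …, e_{d−4}) defined by e_j = 6a · C(j+3,3) · C(d−3−j,1) · d_{j+3} + 4b · C(j+2,2) · C(d−2−j,2) · d_{j+2} + 6c · C(j+1,1) · C(d−1−j,3) · d_{j+1} (where C(n,r) is the binomial coefficient) is log-concave and has no internal zeros. -/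
/-- The finite sequence `a 0, …, a N` is log-concave: `a k ^ 2 ≥ a (k-1) * a (k+1)`
for all `0 < k < N`. -/
def IsLogConcave (a : ℕ → ℝ) (N : ℕ) : Prop :=
  ∀ k : ℕ, 0 < k → k < N → a (k - 1) * a (k + 1) ≤ a k ^ 2

/-- The finite sequence `a 0, …, a N` has no internal zeros: there are no indices
`i < j < l ≤ N` with `a i ≠ 0`, `a j = 0` and `a l ≠ 0`. -/
def HasNoInternalZeros (a : ℕ → ℝ) (N : ℕ) : Prop :=
  ∀ i j l : ℕ, i < j → j < l → l ≤ N → a i ≠ 0 → a l ≠ 0 → a j ≠ 0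

/-- The convolution sequence appearing in the main theorem. -/
def econv (a b c : ℝ) (d : ℕ) (ds : ℕ → ℝ) : ℕ → ℝ := fun j =>
  6 * a * (Nat.choose (j + 3) 3) * (Nat.choose (d - 3 - j) 1) * ds (j + 3)
    + 4 * b * (Nat.choose (j + 2) 2) * (Nat.choose (d - 2 - j) 2) * ds (j + 2)
    + 6 * c * (Nat.choose (j + 1) 1) * (Nat.choose (d - 1 - j) 3) * ds (j + 1)

/-- A single spike sequence. -/
def spike (n : ℕ) : ℕ → ℝ := fun i => if i = n + 3 then 1 else 0

lemma spike_self (n : ℕ) : spike n (n + 3) = 1 := if_pos rfl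

lemma spike_ne (n i : ℕ) (h : i ≠ n + 3) : spike n i = 0 := if_neg h

lemma rch2 (n : ℕ) : ((Nat.choose (n + 2) 2 : ℕ) : ℝ) = ((n:ℝ)+1)*((n:ℝ)+2)/2 := by
  induction n with
  | zero => norm_num
  | succ m ih =>
      rw [show m + 1 + 2 = (m + 2) + 1 from rfl, Nat.choose_succ_succ (m+2) 1,
        Nat.choose_one_right]
      push_cast
      push_cast at ih
      linarith [ih]

lemma rch3 (n : ℕ) : ((Nat.choose (n + 3) 3 : ℕ) : ℝ) = ((n:ℝ)+1)*((n:ℝ)+2)*((n:ℝ)+3)/6 := by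
  induction n with
  | zero => norm_num
  | succ m ih =>
      rw [show m + 1 + 3 = (m + 3) + 1 from rfl, Nat.choose_succ_succ (m+3) 2]
      have h2 := rch2 (m+1)
      push_cast
      push_cast at ih h2
      rw [show m + 3 = (m + 1) + 2 from rfl]
      push_cast
      linarith [ih, h2]

lemma evalE (a b c : ℝ) (ds : ℕ → ℝ) (q s d : ℕ) (hd : d = q + s + 4) :
    econv a b c d ds q
      = a*((q:ℝ)+1)*((q:ℝ)+2)*((q:ℝ)+3)*((s:ℝ)+1)*ds (q+3)
        + b*((q:ℝ)+1)*((q:ℝ)+2)*((s:ℝ)+1)*((s:ℝ)+2)*ds (q+2)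
        + c*((q:ℝ)+1)*((s:ℝ)+1)*((s:ℝ)+2)*((s:ℝ)+3)*ds (q+1) := by
  subst hd
  simp only [econv]
  rw [show q + s + 4 - 3 - q = s + 1 from by omega,
      show q + s + 4 - 2 - q = s + 2 from by omega,
      show q + s + 4 - 1 - q = s + 3 from by omega,
      rch3 q, rch3 s, rch2 q, rch2 s]
  simp only [Nat.choose_one_right]
  push_cast
  ring

lemma gap3 (ds : ℕ → ℝ) (d : ℕ) (hpos : ∀ i ≤ d, 0 ≤ ds i) (hlc : IsLogConcave ds d)
    (hniz : HasNoInternalZeros ds d) (i : ℕ) (hid : i + 3 ≤ d) :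
    ds i * ds (i+3) ≤ ds (i+1) * ds (i+2) := by
  rcases eq_or_ne (ds (i+1)) 0 with h1 | h1
  · have hz : ds i * ds (i+3) ≤ 0 := by
      rcases eq_or_ne (ds i) 0 with h0 | h0
      · rw [h0, zero_mul]
      · have h3 : ds (i+3) = 0 := by
          by_contra h3
          exact (hniz i (i+1) (i+3) (by omega) (by omega) hid h0 h3) h1
        rw [h3, mul_zero]
    exact le_trans hz (mul_nonneg (hpos _ (by omega)) (hpos _ (by omega)))
  · rcases eq_or_ne (ds (i+2)) 0 with h2 | h2
    · have hz : ds i * ds (i+3) ≤ 0 := by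
        rcases eq_or_ne (ds i) 0 with h0 | h0
        · rw [h0, zero_mul]
        · have h3 : ds (i+3) = 0 := by
            by_contra h3
            exact (hniz i (i+2) (i+3) (by omega) (by omega) hid h0 h3) h2
          rw [h3, mul_zero]
      exact le_trans hz (mul_nonneg (hpos _ (by omega)) (hpos _ (by omega)))
    · have p1 : 0 < ds (i+1) := (hpos _ (by omega)).lt_of_ne (Ne.symm h1)
      have p2 : 0 < ds (i+2) := (hpos _ (by omega)).lt_of_ne (Ne.symm h2)
      have lc1 : ds i * ds (i+2) ≤ ds (i+1)^2 := hlc (i+1) (by omega) (by omega)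
      have lc2 : ds (i+1) * ds (i+3) ≤ ds (i+2)^2 := hlc (i+2) (by omega) (by omega)
      have key : (ds i * ds (i+3)) * (ds (i+1) * ds (i+2))
          ≤ (ds (i+1) * ds (i+2)) * (ds (i+1) * ds (i+2)) := by
        nlinarith [mul_le_mul lc1 lc2 (mul_nonneg (hpos _ (by omega)) (hpos _ (by omega)))
          (sq_nonneg (ds (i+1)))]
      exact le_of_mul_le_mul_right key (mul_pos p1 p2)

lemma gap4 (ds : ℕ → ℝ) (d : ℕ) (hpos : ∀ i ≤ d, 0 ≤ ds i) (hlc : IsLogConcave ds d)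
    (hniz : HasNoInternalZeros ds d) (i : ℕ) (hid : i + 4 ≤ d) :
    ds i * ds (i+4) ≤ ds (i+1) * ds (i+3) := by
  rcases eq_or_ne (ds (i+2)) 0 with h2 | h2
  · have hz : ds i * ds (i+4) ≤ 0 := by
      rcases eq_or_ne (ds i) 0 with h0 | h0
      · rw [h0, zero_mul]
      · have h4 : ds (i+4) = 0 := by
          by_contra h4
          exact (hniz i (i+2) (i+4) (by omega) (by omega) hid h0 h4) h2
        rw [h4, mul_zero]
    exact le_trans hz (mul_nonneg (hpos _ (by omega)) (hpos _ (by omega)))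
  · have p2 : 0 < ds (i+2) := (hpos _ (by omega)).lt_of_ne (Ne.symm h2)
    have lc1 : ds i * ds (i+2) ≤ ds (i+1)^2 := hlc (i+1) (by omega) (by omega)
    have lc2 : ds (i+2) * ds (i+4) ≤ ds (i+3)^2 := hlc (i+3) (by omega) (by omega)
    have lcm : ds (i+1) * ds (i+3) ≤ ds (i+2)^2 := hlc (i+2) (by omega) (by omega)
    have key : (ds i * ds (i+4)) * (ds (i+2) * ds (i+2))
        ≤ (ds (i+1) * ds (i+3)) * (ds (i+2) * ds (i+2)) := by
      nlinarith [mul_le_mul lc1 lc2 (mul_nonneg (hpos _ (by omega)) (hpos _ (by omega)))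
        (sq_nonneg (ds (i+1))),
        mul_le_mul_of_nonneg_left lcm (mul_nonneg (hpos (i+1) (by omega)) (hpos (i+3) (by omega)))]
    exact le_of_mul_le_mul_right key (mul_pos p2 p2)

set_option maxHeartbeats 1000000 in
lemma f1Cov (q r : ℕ) :
    ((q:ℝ)+1)*((q:ℝ)+2)*((q:ℝ)+3)*((r:ℝ)+3) * (((q:ℝ)+3)*((q:ℝ)+4)*((q:ℝ)+5)*((r:ℝ)+1)) ≤ (((q:ℝ)+2)*((q:ℝ)+3)*((q:ℝ)+4)*((r:ℝ)+2))^2 := by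
  have hcert : (0:ℝ) ≤ 1224 + 864*(r:ℝ) + 216*(r:ℝ)^2 + 2166*(q:ℝ) + 1224*(q:ℝ)*(r:ℝ) + 306*(q:ℝ)*(r:ℝ)^2 + 1585*(q:ℝ)^2 + 636*(q:ℝ)^2*(r:ℝ) + 159*(q:ℝ)^2*(r:ℝ)^2 + 624*(q:ℝ)^3 + 144*(q:ℝ)^3*(r:ℝ) + 36*(q:ℝ)^3*(r:ℝ)^2 + 142*(q:ℝ)^4 + 12*(q:ℝ)^4*(r:ℝ) + 3*(q:ℝ)^4*(r:ℝ)^2 + 18*(q:ℝ)^5 + 1*(q:ℝ)^6 := by positivity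
  linarith [hcert]

set_option maxHeartbeats 1000000 in
lemma f2Cov (q r : ℕ) :
    ((q:ℝ)+1)*((r:ℝ)+3)*((r:ℝ)+4)*((r:ℝ)+5) * (((q:ℝ)+3)*((r:ℝ)+1)*((r:ℝ)+2)*((r:ℝ)+3)) ≤ (((q:ℝ)+2)*((r:ℝ)+2)*((r:ℝ)+3)*((r:ℝ)+4))^2 := by
  have hcert : (0:ℝ) ≤ 1224 + 2166*(r:ℝ) + 1585*(r:ℝ)^2 + 624*(r:ℝ)^3 + 142*(r:ℝ)^4 + 18*(r:ℝ)^5 + 1*(r:ℝ)^6 + 864*(q:ℝ) + 1224*(q:ℝ)*(r:ℝ) + 636*(q:ℝ)*(r:ℝ)^2 + 144*(q:ℝ)*(r:ℝ)^3 + 12*(q:ℝ)*(r:ℝ)^4 + 216*(q:ℝ)^2 + 306*(q:ℝ)^2*(r:ℝ) + 159*(q:ℝ)^2*(r:ℝ)^2 + 36*(q:ℝ)^2*(r:ℝ)^3 + 3*(q:ℝ)^2*(r:ℝ)^4 := by positivity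
  linarith [hcert]

set_option maxHeartbeats 1000000 in
lemma f3Cov (q r : ℕ) :
    ((q:ℝ)+1)*((q:ℝ)+2)*((q:ℝ)+3)*((r:ℝ)+3) * (((q:ℝ)+3)*((q:ℝ)+4)*((r:ℝ)+1)*((r:ℝ)+2)) + (((q:ℝ)+1)*((q:ℝ)+2)*((r:ℝ)+3)*((r:ℝ)+4)) * (((q:ℝ)+3)*((q:ℝ)+4)*((q:ℝ)+5)*((r:ℝ)+1)) ≤ 2*((((q:ℝ)+2)*((q:ℝ)+3)*((q:ℝ)+4)*((r:ℝ)+2)) * (((q:ℝ)+2)*((q:ℝ)+3)*((r:ℝ)+2)*((r:ℝ)+3))) := by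
  have hcert : (0:ℝ) ≤ 1584 + 1536*(r:ℝ) + 624*(r:ℝ)^2 + 96*(r:ℝ)^3 + 2292*(q:ℝ) + 1712*(q:ℝ)*(r:ℝ) + 628*(q:ℝ)*(r:ℝ)^2 + 104*(q:ℝ)*(r:ℝ)^3 + 1362*(q:ℝ)^2 + 676*(q:ℝ)^2*(r:ℝ) + 182*(q:ℝ)^2*(r:ℝ)^2 + 36*(q:ℝ)^2*(r:ℝ)^3 + 438*(q:ℝ)^3 + 134*(q:ℝ)^3*(r:ℝ) + 8*(q:ℝ)^3*(r:ℝ)^2 + 3*(q:ℝ)^3*(r:ℝ)^3 + 78*(q:ℝ)^4 + 20*(q:ℝ)^4*(r:ℝ) + 6*(q:ℝ)^5 + 1*(q:ℝ)^5*(r:ℝ) + (q:ℝ)^3*(r:ℝ)*((q:ℝ)-(r:ℝ))^2 := by positivity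
  linarith [hcert]

set_option maxHeartbeats 1000000 in
lemma f4Cov (q r : ℕ) :
    ((q:ℝ)+1)*((q:ℝ)+2)*((r:ℝ)+3)*((r:ℝ)+4) * (((q:ℝ)+3)*((r:ℝ)+1)*((r:ℝ)+2)*((r:ℝ)+3)) + (((q:ℝ)+1)*((r:ℝ)+3)*((r:ℝ)+4)*((r:ℝ)+5)) * (((q:ℝ)+3)*((q:ℝ)+4)*((r:ℝ)+1)*((r:ℝ)+2)) ≤ 2*((((q:ℝ)+2)*((q:ℝ)+3)*((r:ℝ)+2)*((r:ℝ)+3)) * (((q:ℝ)+2)*((r:ℝ)+2)*((r:ℝ)+3)*((r:ℝ)+4))) := by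
  have hcert : (0:ℝ) ≤ 1584 + 2292*(r:ℝ) + 1362*(r:ℝ)^2 + 438*(r:ℝ)^3 + 78*(r:ℝ)^4 + 6*(r:ℝ)^5 + 1536*(q:ℝ) + 1712*(q:ℝ)*(r:ℝ) + 676*(q:ℝ)*(r:ℝ)^2 + 134*(q:ℝ)*(r:ℝ)^3 + 20*(q:ℝ)*(r:ℝ)^4 + 1*(q:ℝ)*(r:ℝ)^5 + 624*(q:ℝ)^2 + 628*(q:ℝ)^2*(r:ℝ) + 182*(q:ℝ)^2*(r:ℝ)^2 + 8*(q:ℝ)^2*(r:ℝ)^3 + 96*(q:ℝ)^3 + 104*(q:ℝ)^3*(r:ℝ) + 36*(q:ℝ)^3*(r:ℝ)^2 + 3*(q:ℝ)^3*(r:ℝ)^3 + (q:ℝ)*(r:ℝ)^3*((q:ℝ)-(r:ℝ))^2 := by positivity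
  linarith [hcert]

set_option maxHeartbeats 1000000 in
lemma f5Cov (q r : ℕ) :
    ((q:ℝ)+1)*((q:ℝ)+2)*((r:ℝ)+3)*((r:ℝ)+4) * (((q:ℝ)+3)*((q:ℝ)+4)*((r:ℝ)+1)*((r:ℝ)+2)) ≤ (((q:ℝ)+2)*((q:ℝ)+3)*((r:ℝ)+2)*((r:ℝ)+3))^2 := by
  have hcert : (0:ℝ) ≤ 720 + 960*(r:ℝ) + 492*(r:ℝ)^2 + 120*(r:ℝ)^3 + 12*(r:ℝ)^4 + 960*(q:ℝ) + 1100*(q:ℝ)*(r:ℝ) + 470*(q:ℝ)*(r:ℝ)^2 + 100*(q:ℝ)*(r:ℝ)^3 + 10*(q:ℝ)*(r:ℝ)^4 + 492*(q:ℝ)^2 + 470*(q:ℝ)^2*(r:ℝ) + 144*(q:ℝ)^2*(r:ℝ)^2 + 20*(q:ℝ)^2*(r:ℝ)^3 + 2*(q:ℝ)^2*(r:ℝ)^4 + 120*(q:ℝ)^3 + 100*(q:ℝ)^3*(r:ℝ) + 20*(q:ℝ)^3*(r:ℝ)^2 + 12*(q:ℝ)^4 + 10*(q:ℝ)^4*(r:ℝ)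 + 2*(q:ℝ)^4*(r:ℝ)^2 := by positivity
  linarith [hcert]

set_option maxHeartbeats 1000000 in
lemma f6Cov (q r : ℕ) :
    ((q:ℝ)+1)*((q:ℝ)+2)*((q:ℝ)+3)*((r:ℝ)+3) * (((q:ℝ)+3)*((r:ℝ)+1)*((r:ℝ)+2)*((r:ℝ)+3)) ≤ (((q:ℝ)+2)*((q:ℝ)+3)*((r:ℝ)+2)*((r:ℝ)+3))^2 := by
  have hcert : (0:ℝ) ≤ 972 + 1458*(r:ℝ) + 810*(r:ℝ)^2 + 198*(r:ℝ)^3 + 18*(r:ℝ)^4 + 1458*(q:ℝ) + 2079*(q:ℝ)*(r:ℝ) + 1089*(q:ℝ)*(r:ℝ)^2 + 249*(q:ℝ)*(r:ℝ)^3 + 21*(q:ℝ)*(r:ℝ)^4 + 810*(q:ℝ)^2 + 1089*(q:ℝ)^2*(r:ℝ) + 528*(q:ℝ)^2*(r:ℝ)^2 + 109*(q:ℝ)^2*(r:ℝ)^3 + 8*(q:ℝ)^2*(r:ℝ)^4 + 198*(q:ℝ)^3 + 249*(q:ℝ)^3*(r:ℝ) + 109*(q:ℝ)^3*(r:ℝ)^2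 + 19*(q:ℝ)^3*(r:ℝ)^3 + 1*(q:ℝ)^3*(r:ℝ)^4 + 18*(q:ℝ)^4 + 21*(q:ℝ)^4*(r:ℝ) + 8*(q:ℝ)^4*(r:ℝ)^2 + 1*(q:ℝ)^4*(r:ℝ)^3 := by positivity
  linarith [hcert]

set_option maxHeartbeats 1000000 in
lemma f7Cov (q r : ℕ) :
    ((q:ℝ)+1)*((q:ℝ)+2)*((q:ℝ)+3)*((r:ℝ)+3) * (((q:ℝ)+3)*((r:ℝ)+1)*((r:ℝ)+2)*((r:ℝ)+3)) + (((q:ℝ)+1)*((r:ℝ)+3)*((r:ℝ)+4)*((r:ℝ)+5)) * (((q:ℝ)+3)*((q:ℝ)+4)*((q:ℝ)+5)*((r:ℝ)+1)) + (((q:ℝ)+1)*((q:ℝ)+2)*((r:ℝ)+3)*((r:ℝ)+4)) * (((q:ℝ)+3)*((q:ℝ)+4)*((r:ℝ)+1)*((r:ℝ)+2)) ≤ (((q:ℝ)+2)*((q:ℝ)+3)*((r:ℝ)+2)*((r:ℝ)+3))^2 + 2*((((q:ℝ)+2)*((q:ℝ)+3)*((q:ℝ)+4)*((r:ℝ)+2))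 * (((q:ℝ)+2)*((r:ℝ)+2)*((r:ℝ)+3)*((r:ℝ)+4))) + 2*((((q:ℝ)+2)*((q:ℝ)+3)*((q:ℝ)+4)*((r:ℝ)+2))^2 - (((q:ℝ)+1)*((q:ℝ)+2)*((q:ℝ)+3)*((r:ℝ)+3)) * (((q:ℝ)+3)*((q:ℝ)+4)*((q:ℝ)+5)*((r:ℝ)+1))) := by
  have hcert : (0:ℝ) ≤ 3852 + 2862*(r:ℝ) + 1086*(r:ℝ)^2 + 234*(r:ℝ)^3 + 30*(r:ℝ)^4 + 5466*(q:ℝ) + 2130*(q:ℝ)*(r:ℝ) + 326*(q:ℝ)*(r:ℝ)^2 + 30*(q:ℝ)*(r:ℝ)^3 + 3824*(q:ℝ)^2 + 986*(q:ℝ)^2*(r:ℝ) + 12*(q:ℝ)^2*(r:ℝ)^2 + 1482*(q:ℝ)^3 + 318*(q:ℝ)^3*(r:ℝ) + 7*(q:ℝ)^3*(r:ℝ)^2 + 314*(q:ℝ)^4 + 40*(q:ℝ)^4*(r:ℝ) + 36*(q:ℝ)^5 + 2*(q:ℝ)^6 + 2*(q:ℝ)^2*(r:ℝ)^2*(2*(q:ℝ)-(r:ℝ))^2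 + (q:ℝ)*(r:ℝ)^2*(4*(r:ℝ)-5*(q:ℝ))^2 := by positivity
  linarith [hcert]

set_option maxHeartbeats 1000000 in
lemma f8Cov (q r : ℕ) :
    ((q:ℝ)+1)*((q:ℝ)+2)*((q:ℝ)+3)*((r:ℝ)+3) * (((q:ℝ)+3)*((r:ℝ)+1)*((r:ℝ)+2)*((r:ℝ)+3)) + (((q:ℝ)+1)*((r:ℝ)+3)*((r:ℝ)+4)*((r:ℝ)+5)) * (((q:ℝ)+3)*((q:ℝ)+4)*((q:ℝ)+5)*((r:ℝ)+1)) + (((q:ℝ)+1)*((q:ℝ)+2)*((r:ℝ)+3)*((r:ℝ)+4)) * (((q:ℝ)+3)*((q:ℝ)+4)*((r:ℝ)+1)*((r:ℝ)+2)) ≤ (((q:ℝ)+2)*((q:ℝ)+3)*((r:ℝ)+2)*((r:ℝ)+3))^2 + 2*((((q:ℝ)+2)*((q:ℝ)+3)*((q:ℝ)+4)*((r:ℝ)+2)) * (((q:ℝ)+2)*((r:ℝ)+2)*((r:ℝ)+3)*((r:ℝ)+4))) + 2*((((q:ℝ)+2)*((r:ℝ)+2)*((r:ℝ)+3)*((r:ℝ)+4))^2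 - (((q:ℝ)+1)*((r:ℝ)+3)*((r:ℝ)+4)*((r:ℝ)+5)) * (((q:ℝ)+3)*((r:ℝ)+1)*((r:ℝ)+2)*((r:ℝ)+3))) := by
  have hcert : (0:ℝ) ≤ 3852 + 5466*(r:ℝ) + 3824*(r:ℝ)^2 + 1482*(r:ℝ)^3 + 314*(r:ℝ)^4 + 36*(r:ℝ)^5 + 2862*(q:ℝ) + 2130*(q:ℝ)*(r:ℝ) + 986*(q:ℝ)*(r:ℝ)^2 + 318*(q:ℝ)*(r:ℝ)^3 + 40*(q:ℝ)*(r:ℝ)^4 + 1086*(q:ℝ)^2 + 326*(q:ℝ)^2*(r:ℝ) + 12*(q:ℝ)^2*(r:ℝ)^2 + 7*(q:ℝ)^2*(r:ℝ)^3 + 234*(q:ℝ)^3 + 30*(q:ℝ)^3*(r:ℝ) + 30*(q:ℝ)^4 + 2*(r:ℝ)^6 + 2*(q:ℝ)^2*(r:ℝ)^2*(2*(r:ℝ)-(q:ℝ))^2 + (q:ℝ)^2*(r:ℝ)*(4*(q:ℝ)-5*(r:ℝ))^2 := by positivity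
  linarith [hcert]

set_option maxHeartbeats 1000000 in
lemma masterCore (a b c u0 u1 u2 u3 u4 P0 P1 P2 Q0 Q1 Q2 R0 R1 R2 : ℝ)
    (ha : 0 ≤ a) (hb : 0 ≤ b) (hc : 0 ≤ c) (hbac : a*c ≤ b^2)
    (hu0 : 0 ≤ u0) (hu1 : 0 ≤ u1) (hu2 : 0 ≤ u2) (hu3 : 0 ≤ u3) (hu4 : 0 ≤ u4)
    (l1 : u0*u2 ≤ u1^2) (l2 : u1*u3 ≤ u2^2) (l3 : u2*u4 ≤ u3^2)
    (l4 : u1*u4 ≤ u2*u3) (l5 : u0*u4 ≤ u1*u3) (l6 : u0*u3 ≤ u1*u2)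
    (hP0 : 0 ≤ P0) (hP1 : 0 ≤ P1) (hP2 : 0 ≤ P2) (hQ0 : 0 ≤ Q0) (hQ1 : 0 ≤ Q1)
    (hQ2 : 0 ≤ Q2) (hR0 : 0 ≤ R0) (hR1 : 0 ≤ R1) (hR2 : 0 ≤ R2)
    (hF1 : P0*P2 ≤ P1^2) (hF2 : R0*R2 ≤ R1^2)
    (hF3 : P0*Q2 + Q0*P2 ≤ 2*(P1*Q1)) (hF4 : Q0*R2 + R0*Q2 ≤ 2*(Q1*R1))
    (hF5 : Q0*Q2 ≤ Q1^2) (hF6 : P0*R2 ≤ Q1^2)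
    (hF7 : P0*R2 + R0*P2 + Q0*Q2 ≤ Q1^2 + 2*(P1*R1) + 2*(P1^2 - P0*P2))
    (hF8 : P0*R2 + R0*P2 + Q0*Q2 ≤ Q1^2 + 2*(P1*R1) + 2*(R1^2 - R0*R2)) :
    (a*P0*u2 + b*Q0*u1 + c*R0*u0) * (a*P2*u4 + b*Q2*u3 + c*R2*u2)
      ≤ (a*P1*u3 + b*Q1*u2 + c*R1*u1)^2 := by
  have T1 : 0 ≤ a^2*(P0*P2)*(u3^2 - u2*u4) :=
    mul_nonneg (mul_nonneg (sq_nonneg a) (mul_nonneg hP0 hP2)) (sub_nonneg.2 l3)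
  have T2 : 0 ≤ c^2*(R0*R2)*(u1^2 - u0*u2) :=
    mul_nonneg (mul_nonneg (sq_nonneg c) (mul_nonneg hR0 hR2)) (sub_nonneg.2 l1)
  have T3 : 0 ≤ a*b*(Q0*P2)*(u2*u3 - u1*u4) :=
    mul_nonneg (mul_nonneg (mul_nonneg ha hb) (mul_nonneg hQ0 hP2)) (sub_nonneg.2 l4)
  have T4 : 0 ≤ a*b*(2*(P1*Q1) - (P0*Q2 + Q0*P2))*(u2*u3) :=
    mul_nonneg (mul_nonneg (mul_nonneg ha hb) (sub_nonneg.2 hF3)) (mul_nonneg hu2 hu3)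
  have T5 : 0 ≤ b*c*(R0*Q2)*(u1*u2 - u0*u3) :=
    mul_nonneg (mul_nonneg (mul_nonneg hb hc) (mul_nonneg hR0 hQ2)) (sub_nonneg.2 l6)
  have T6 : 0 ≤ b*c*(2*(Q1*R1) - (Q0*R2 + R0*Q2))*(u1*u2) :=
    mul_nonneg (mul_nonneg (mul_nonneg hb hc) (sub_nonneg.2 hF4)) (mul_nonneg hu1 hu2)
  have T7 : 0 ≤ a*c*(R0*P2)*(u1*u3 - u0*u4) :=
    mul_nonneg (mul_nonneg (mul_nonneg ha hc) (mul_nonneg hR0 hP2)) (sub_nonneg.2 l5)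
  have T8 : 0 ≤ (b^2 - a*c)*(Q1^2*u2^2 - Q0*Q2*(u1*u3)) :=
    mul_nonneg (sub_nonneg.2 hbac)
      (sub_nonneg.2 (mul_le_mul hF5 l2 (mul_nonneg hu1 hu3) (sq_nonneg Q1)))
  have T9 : 0 ≤ a*c*(Q1^2 - P0*R2)*(u2^2 - u1*u3) :=
    mul_nonneg (mul_nonneg (mul_nonneg ha hc) (sub_nonneg.2 hF6)) (sub_nonneg.2 l2)
  have T10 : 0 ≤ a^2*(P1^2 - P0*P2)*u3^2 + c^2*(R1^2 - R0*R2)*u1^2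
      + a*c*(Q1^2 + 2*(P1*R1) - P0*R2 - R0*P2 - Q0*Q2)*(u1*u3) := by
    rcases le_total (P1^2 - P0*P2) (R1^2 - R0*R2) with hss | hss
    · have m1 : 0 ≤ (P1^2 - P0*P2) * (a*u3 - c*u1)^2 :=
        mul_nonneg (sub_nonneg.2 hF1) (sq_nonneg _)
      have m2 : 0 ≤ ((R1^2 - R0*R2) - (P1^2 - P0*P2)) * (c*u1)^2 :=
        mul_nonneg (sub_nonneg.2 hss) (sq_nonneg _)
      have m3 : 0 ≤ (Q1^2 + 2*(P1*R1) - P0*R2 - R0*P2 - Q0*Q2 + 2*(P1^2 - P0*P2))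
          * ((a*u3)*(c*u1)) :=
        mul_nonneg (by linarith [hF7]) (mul_nonneg (mul_nonneg ha hu3) (mul_nonneg hc hu1))
      linarith [m1, m2, m3]
    · have m1 : 0 ≤ (R1^2 - R0*R2) * (a*u3 - c*u1)^2 :=
        mul_nonneg (sub_nonneg.2 hF2) (sq_nonneg _)
      have m2 : 0 ≤ ((P1^2 - P0*P2) - (R1^2 - R0*R2)) * (a*u3)^2 :=
        mul_nonneg (sub_nonneg.2 hss) (sq_nonneg _)
      have m3 : 0 ≤ (Q1^2 + 2*(P1*R1) - P0*R2 - R0*P2 - Q0*Q2 + 2*(R1^2 - R0*R2))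
          * ((a*u3)*(c*u1)) :=
        mul_nonneg (by linarith [hF8]) (mul_nonneg (mul_nonneg ha hu3) (mul_nonneg hc hu1))
      linarith [m1, m2, m3]
  linarith [T1, T2, T3, T4, T5, T6, T7, T8, T9, T10]

set_option maxHeartbeats 1000000 in
lemma eLCkey (a b c : ℝ) (ha : 0 ≤ a) (hb : 0 ≤ b) (hc : 0 ≤ c) (hbac : a*c ≤ b^2)
    (q r : ℕ) (ds : ℕ → ℝ)
    (hu0 : 0 ≤ ds (q+1)) (hu1 : 0 ≤ ds (q+2)) (hu2 : 0 ≤ ds (q+3))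
    (hu3 : 0 ≤ ds (q+4)) (hu4 : 0 ≤ ds (q+5))
    (l1 : ds (q+1) * ds (q+3) ≤ ds (q+2)^2) (l2 : ds (q+2) * ds (q+4) ≤ ds (q+3)^2)
    (l3 : ds (q+3) * ds (q+5) ≤ ds (q+4)^2) (l4 : ds (q+2) * ds (q+5) ≤ ds (q+3) * ds (q+4))
    (l5 : ds (q+1) * ds (q+5) ≤ ds (q+2) * ds (q+4)) (l6 : ds (q+1) * ds (q+4) ≤ ds (q+2) * ds (q+3)) :
    econv a b c (q+r+6) ds q * econv a b c (q+r+6) ds (q+2)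
      ≤ econv a b c (q+r+6) ds (q+1) ^ 2 := by
  rw [evalE a b c ds q (r+2) (q+r+6) (by omega),
      evalE a b c ds (q+1) (r+1) (q+r+6) (by omega),
      evalE a b c ds (q+2) r (q+r+6) (by omega),
      show q+1+3 = q+4 from by omega, show q+2+3 = q+5 from by omega,
      show q+1+2 = q+3 from by omega, show q+2+2 = q+4 from by omega,
      show q+1+1 = q+2 from by omega, show q+2+1 = q+3 from by omega]
  push_cast
  have hP0 : (0:ℝ) ≤ ((q:ℝ)+1)*((q:ℝ)+2)*((q:ℝ)+3)*((r:ℝ)+3) := by positivity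
  have hP1 : (0:ℝ) ≤ ((q:ℝ)+2)*((q:ℝ)+3)*((q:ℝ)+4)*((r:ℝ)+2) := by positivity
  have hP2 : (0:ℝ) ≤ ((q:ℝ)+3)*((q:ℝ)+4)*((q:ℝ)+5)*((r:ℝ)+1) := by positivity
  have hQ0 : (0:ℝ) ≤ ((q:ℝ)+1)*((q:ℝ)+2)*((r:ℝ)+3)*((r:ℝ)+4) := by positivity
  have hQ1 : (0:ℝ) ≤ ((q:ℝ)+2)*((q:ℝ)+3)*((r:ℝ)+2)*((r:ℝ)+3) := by positivity
  have hQ2 : (0:ℝ) ≤ ((q:ℝ)+3)*((q:ℝ)+4)*((r:ℝ)+1)*((r:ℝ)+2) := by positivity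
  have hR0 : (0:ℝ) ≤ ((q:ℝ)+1)*((r:ℝ)+3)*((r:ℝ)+4)*((r:ℝ)+5) := by positivity
  have hR1 : (0:ℝ) ≤ ((q:ℝ)+2)*((r:ℝ)+2)*((r:ℝ)+3)*((r:ℝ)+4) := by positivity
  have hR2 : (0:ℝ) ≤ ((q:ℝ)+3)*((r:ℝ)+1)*((r:ℝ)+2)*((r:ℝ)+3) := by positivity
  linarith [masterCore a b c (ds (q+1)) (ds (q+2)) (ds (q+3)) (ds (q+4)) (ds (q+5))
    (((q:ℝ)+1)*((q:ℝ)+2)*((q:ℝ)+3)*((r:ℝ)+3))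
    (((q:ℝ)+2)*((q:ℝ)+3)*((q:ℝ)+4)*((r:ℝ)+2))
    (((q:ℝ)+3)*((q:ℝ)+4)*((q:ℝ)+5)*((r:ℝ)+1))
    (((q:ℝ)+1)*((q:ℝ)+2)*((r:ℝ)+3)*((r:ℝ)+4))
    (((q:ℝ)+2)*((q:ℝ)+3)*((r:ℝ)+2)*((r:ℝ)+3))
    (((q:ℝ)+3)*((q:ℝ)+4)*((r:ℝ)+1)*((r:ℝ)+2))
    (((q:ℝ)+1)*((r:ℝ)+3)*((r:ℝ)+4)*((r:ℝ)+5))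
    (((q:ℝ)+2)*((r:ℝ)+2)*((r:ℝ)+3)*((r:ℝ)+4))
    (((q:ℝ)+3)*((r:ℝ)+1)*((r:ℝ)+2)*((r:ℝ)+3))
    ha hb hc hbac hu0 hu1 hu2 hu3 hu4 l1 l2 l3 l4 l5 l6
    hP0 hP1 hP2 hQ0 hQ1 hQ2 hR0 hR1 hR2
    (f1Cov q r) (f2Cov q r) (f3Cov q r) (f4Cov q r)
    (f5Cov q r) (f6Cov q r) (f7Cov q r) (f8Cov q r)]

set_option maxHeartbeats 1000000 in
/-- For nonnegative reals `a b c`, one has `b ^ 2 ≥ a * c` if and only if for every `d ≥ 4`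
and every nonnegative log-concave sequence `(d_0, …, d_d)` with no internal zeros, the
sequence `(e_0, …, e_{d-4})` given by
`e j = 6a⬝C(j+3,3)⬝C(d-3-j,1)⬝d_{j+3} + 4b⬝C(j+2,2)⬝C(d-2-j,2)⬝d_{j+2}
  + 6c⬝C(j+1,1)⬝C(d-1-j,3)⬝d_{j+1}`
is log-concave with no internal zeros. -/
theorem sq_ge_mul_iff_convolution_logConcave
    (a b c : ℝ) (ha : 0 ≤ a) (hb : 0 ≤ b) (hc : 0 ≤ c) :
    b ^ 2 ≥ a * c ↔
      ∀ d : ℕ, 4 ≤ d → ∀ ds : ℕ → ℝ,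
        (∀ i ≤ d, 0 ≤ ds i) → IsLogConcave ds d → HasNoInternalZeros ds d →
        (IsLogConcave
            (fun j => 6 * a * (Nat.choose (j + 3) 3) * (Nat.choose (d - 3 - j) 1) * ds (j + 3)
              + 4 * b * (Nat.choose (j + 2) 2) * (Nat.choose (d - 2 - j) 2) * ds (j + 2)
              + 6 * c * (Nat.choose (j + 1) 1) * (Nat.choose (d - 1 - j) 3) * ds (j + 1))
            (d - 4) ∧
          HasNoInternalZeros
            (fun j => 6 * a * (Nat.choose (j + 3) 3) * (Nat.choose (d - 3 - j) 1) * ds (j + 3)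
              + 4 * b * (Nat.choose (j + 2) 2) * (Nat.choose (d - 2 - j) 2) * ds (j + 2)
              + 6 * c * (Nat.choose (j + 1) 1) * (Nat.choose (d - 1 - j) 3) * ds (j + 1))
            (d - 4)) := by
  constructor
  · -- forward direction
    intro hbac d hd4 ds hpos hlc hniz
    have hbac' : a * c ≤ b ^ 2 := hbac
    constructor
    · -- log-concavity
      show IsLogConcave (econv a b c d ds) (d - 4)
      intro k hk0 hkd
      obtain ⟨q, rfl⟩ : ∃ q, k = q + 1 := ⟨k - 1, by omega⟩
      obtain ⟨r, rfl⟩ : ∃ r, d = q + r + 6 := ⟨d - (q + 6), by omega⟩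
      show econv a b c (q+r+6) ds q * econv a b c (q+r+6) ds (q+2)
        ≤ econv a b c (q+r+6) ds (q+1) ^ 2
      exact eLCkey a b c ha hb hc hbac' q r ds
        (hpos _ (by omega)) (hpos _ (by omega)) (hpos _ (by omega))
        (hpos _ (by omega)) (hpos _ (by omega))
        (hlc (q+2) (by omega) (by omega)) (hlc (q+3) (by omega) (by omega))
        (hlc (q+4) (by omega) (by omega))
        (gap3 ds (q+r+6) hpos hlc hniz (q+2) (by omega))
        (gap4 ds (q+r+6) hpos hlc hniz (q+1) (by omega))
        (gap3 ds (q+r+6) hpos hlc hniz (q+1) (by omega))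
    · -- no internal zeros
      show HasNoInternalZeros (econv a b c d ds) (d - 4)
      intro i j l hij hjl hld hi hl
      have hterm : ∀ m : ℕ, econv a b c d ds m ≠ 0 →
          a * ds (m+3) ≠ 0 ∨ b * ds (m+2) ≠ 0 ∨ c * ds (m+1) ≠ 0 := by
        intro m hne
        by_contra hcon
        push_neg at hcon
        obtain ⟨e1, e2, e3⟩ := hcon
        apply hne
        simp only [econv]
        linear_combination (6*((Nat.choose (m+3) 3 : ℕ):ℝ)*((Nat.choose (d-3-m) 1 : ℕ):ℝ)) * e1
          + (4*((Nat.choose (m+2) 2 : ℕ):ℝ)*((Nat.choose (d-2-m) 2 : ℕ):ℝ)) * e2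
          + (6*((Nat.choose (m+1) 1 : ℕ):ℝ)*((Nat.choose (d-1-m) 3 : ℕ):ℝ)) * e3
      rcases lt_or_eq_of_le hb with hbpos | hbeq
      · -- b > 0
        obtain ⟨si, hsi1, hsi3, hdsi⟩ : ∃ s, i+1 ≤ s ∧ s ≤ i+3 ∧ ds s ≠ 0 := by
          rcases hterm i hi with h | h | h
          · exact ⟨i+3, by omega, by omega, right_ne_zero_of_mul h⟩
          · exact ⟨i+2, by omega, by omega, right_ne_zero_of_mul h⟩
          · exact ⟨i+1, by omega, by omega, right_ne_zero_of_mul h⟩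
        obtain ⟨sl, hsl1, hsl3, hdsl⟩ : ∃ s, l+1 ≤ s ∧ s ≤ l+3 ∧ ds s ≠ 0 := by
          rcases hterm l hl with h | h | h
          · exact ⟨l+3, by omega, by omega, right_ne_zero_of_mul h⟩
          · exact ⟨l+2, by omega, by omega, right_ne_zero_of_mul h⟩
          · exact ⟨l+1, by omega, by omega, right_ne_zero_of_mul h⟩
        have hmid : ds (j+2) ≠ 0 := by
          rcases eq_or_lt_of_le (show si ≤ j+2 by omega) with he | hlt
          · rwa [he] at hdsi
          · rcases eq_or_lt_of_le (show j+2 ≤ sl by omega) with he2 | hlt2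
            · rw [he2]; exact hdsl
            · exact hniz si (j+2) sl hlt hlt2 (by omega) hdsi hdsl
        have hj2 : 0 < ds (j+2) := (hpos _ (by omega)).lt_of_ne (Ne.symm hmid)
        have hA : 0 ≤ 6 * a * ((Nat.choose (j+3) 3 : ℕ):ℝ) * ((Nat.choose (d-3-j) 1 : ℕ):ℝ)
            * ds (j+3) :=
          mul_nonneg (mul_nonneg (mul_nonneg (mul_nonneg (by norm_num) ha)
            (Nat.cast_nonneg _)) (Nat.cast_nonneg _)) (hpos _ (by omega))
        have hC : 0 ≤ 6 * c * ((Nat.choose (j+1) 1 : ℕ):ℝ) * ((Nat.choose (d-1-j) 3 : ℕ):ℝ)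
            * ds (j+1) :=
          mul_nonneg (mul_nonneg (mul_nonneg (mul_nonneg (by norm_num) hc)
            (Nat.cast_nonneg _)) (Nat.cast_nonneg _)) (hpos _ (by omega))
        have hB : 0 < 4 * b * ((Nat.choose (j+2) 2 : ℕ):ℝ) * ((Nat.choose (d-2-j) 2 : ℕ):ℝ)
            * ds (j+2) := by
          have c1 : 0 < (Nat.choose (j+2) 2 : ℕ) := Nat.choose_pos (by omega)
          have c2 : 0 < (Nat.choose (d-2-j) 2 : ℕ) := Nat.choose_pos (by omega)
          have c1' : (0:ℝ) < ((Nat.choose (j+2) 2 : ℕ):ℝ) := by exact_mod_cast c1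
          have c2' : (0:ℝ) < ((Nat.choose (d-2-j) 2 : ℕ):ℝ) := by exact_mod_cast c2
          have h4b : (0:ℝ) < 4 * b := by linarith
          exact mul_pos (mul_pos (mul_pos h4b c1') c2') hj2
        have hfin : 0 < econv a b c d ds j := by
          simp only [econv]
          linarith [hA, hB, hC]
        exact hfin.ne'
      · -- b = 0
        have hac : a * c = 0 := by
          have h1 : a * c ≤ 0 := by rw [← hbeq] at hbac'; nlinarith [hbac']
          exact le_antisymm h1 (mul_nonneg ha hc)
        rcases mul_eq_zero.mp hac with ha0 | hc0
        · -- a = 0, b = 0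
          have hci : c * ds (i+1) ≠ 0 := by
            rcases hterm i hi with h | h | h
            · exfalso; apply h; rw [ha0, zero_mul]
            · exfalso; apply h; rw [← hbeq, zero_mul]
            · exact h
          have hcl : c * ds (l+1) ≠ 0 := by
            rcases hterm l hl with h | h | h
            · exfalso; apply h; rw [ha0, zero_mul]
            · exfalso; apply h; rw [← hbeq, zero_mul]
            · exact h
          have hdsj : ds (j+1) ≠ 0 :=
            hniz (i+1) (j+1) (l+1) (by omega) (by omega) (by omega)
              (right_ne_zero_of_mul hci) (right_ne_zero_of_mul hcl)
          have hcpos : 0 < c := hc.lt_of_ne (Ne.symm (left_ne_zero_of_mul hci))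
          have hj1 : 0 < ds (j+1) := (hpos _ (by omega)).lt_of_ne (Ne.symm hdsj)
          have c1 : (0:ℝ) < ((Nat.choose (j+1) 1 : ℕ):ℝ) := by
            exact_mod_cast Nat.choose_pos (show 1 ≤ j+1 by omega)
          have c2 : (0:ℝ) < ((Nat.choose (d-1-j) 3 : ℕ):ℝ) := by
            exact_mod_cast Nat.choose_pos (show 3 ≤ d-1-j by omega)
          have hfin : 0 < econv a b c d ds j := by
            simp only [econv, ha0, ← hbeq]
            have hterm3 : 0 < 6 * c * ((Nat.choose (j+1) 1 : ℕ):ℝ)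
                * ((Nat.choose (d-1-j) 3 : ℕ):ℝ) * ds (j+1) := by
              have h6c : (0:ℝ) < 6 * c := by linarith
              exact mul_pos (mul_pos (mul_pos h6c c1) c2) hj1
            nlinarith [hterm3]
          exact hfin.ne'
        · -- c = 0, b = 0
          have hai : a * ds (i+3) ≠ 0 := by
            rcases hterm i hi with h | h | h
            · exact h
            · exfalso; apply h; rw [← hbeq, zero_mul]
            · exfalso; apply h; rw [hc0, zero_mul]
          have hal : a * ds (l+3) ≠ 0 := by
            rcases hterm l hl with h | h | h
            · exact h
            · exfalso; apply h; rw [← hbeq, zero_mul]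
            · exfalso; apply h; rw [hc0, zero_mul]
          have hdsj : ds (j+3) ≠ 0 :=
            hniz (i+3) (j+3) (l+3) (by omega) (by omega) (by omega)
              (right_ne_zero_of_mul hai) (right_ne_zero_of_mul hal)
          have hapos : 0 < a := ha.lt_of_ne (Ne.symm (left_ne_zero_of_mul hai))
          have hj3 : 0 < ds (j+3) := (hpos _ (by omega)).lt_of_ne (Ne.symm hdsj)
          have c1 : (0:ℝ) < ((Nat.choose (j+3) 3 : ℕ):ℝ) := by
            exact_mod_cast Nat.choose_pos (show 3 ≤ j+3 by omega)
          have c2 : (0:ℝ) < ((Nat.choose (d-3-j) 1 : ℕ):ℝ) := by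
            exact_mod_cast Nat.choose_pos (show 1 ≤ d-3-j by omega)
          have hfin : 0 < econv a b c d ds j := by
            simp only [econv, hc0, ← hbeq]
            have hterm1 : 0 < 6 * a * ((Nat.choose (j+3) 3 : ℕ):ℝ)
                * ((Nat.choose (d-3-j) 1 : ℕ):ℝ) * ds (j+3) := by
              have h6a : (0:ℝ) < 6 * a := by linarith
              exact mul_pos (mul_pos (mul_pos h6a c1) c2) hj3
            nlinarith [hterm1]
          exact hfin.ne'
  · -- backward direction
    intro h
    by_contra hcon
    push_neg at hcon
    have hd0 : (0:ℝ) < a*c - b^2 := by linarith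
    obtain ⟨n, hn⟩ := exists_nat_gt (2*(a*c) / (a*c - b^2))
    have hn' : 2*(a*c) < (n:ℝ) * (a*c - b^2) := (div_lt_iff₀ hd0).mp hn
    obtain ⟨hLC, -⟩ := h (2*n+6) (by omega) (spike n)
      (by
        intro i _
        show 0 ≤ spike n i
        unfold spike
        split <;> norm_num)
      (by
        intro k hk0 hkd
        show spike n (k-1) * spike n (k+1) ≤ spike n k ^ 2
        by_cases h1 : k - 1 = n + 3
        · rw [spike_ne n (k+1) (by omega), mul_zero]
          positivity
        · rw [spike_ne n (k-1) h1, zero_mul]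
          positivity)
      (by
        intro i j l hij hjl hld hi hl
        have hi' : i = n + 3 := by
          by_contra hne; exact hi (spike_ne n i hne)
        have hl' : l = n + 3 := by
          by_contra hne; exact hl (spike_ne n l hne)
        omega)
    have hkey : econv a b c (2*n+6) (spike n) n * econv a b c (2*n+6) (spike n) (n+2)
        ≤ econv a b c (2*n+6) (spike n) (n+1) ^ 2 := hLC (n+1) (by omega) (by omega)
    rw [evalE a b c (spike n) n (n+2) (2*n+6) (by omega),
        evalE a b c (spike n) (n+1) (n+1) (2*n+6) (by omega),
        evalE a b c (spike n) (n+2) n (2*n+6) (by omega),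
        show n+1+3 = n+4 from by omega, show n+2+3 = n+5 from by omega,
        show n+1+2 = n+3 from by omega, show n+2+2 = n+4 from by omega,
        show n+1+1 = n+2 from by omega, show n+2+1 = n+3 from by omega,
        spike_self, spike_ne n (n+1) (by omega), spike_ne n (n+2) (by omega),
        spike_ne n (n+4) (by omega), spike_ne n (n+5) (by omega)] at hkey
    push_cast at hkey
    have hnn : (0:ℝ) ≤ (n:ℝ) := Nat.cast_nonneg n
    have hK : (0:ℝ) < ((n:ℝ)+2)^2*((n:ℝ)+3)^4 := by positivity
    have hred : a*c*((n:ℝ)+1)^2 ≤ b^2*((n:ℝ)+2)^2 := by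
      apply le_of_mul_le_mul_right _ hK
      nlinarith [hkey]
    have hm2 : 2*(a*c) < ((n:ℝ)+2)*(a*c - b^2) := by nlinarith [hn', hd0, hnn]
    have hmul : (2*(a*c))*((n:ℝ)+2) < (((n:ℝ)+2)*(a*c - b^2))*((n:ℝ)+2) :=
      mul_lt_mul_of_pos_right hm2 (by positivity)
    have hacpos : (0:ℝ) < a*c := by nlinarith [hd0, sq_nonneg b]
    nlinarith [hred, hmul, hacpos]
end

section
/- Let (a_0, …, a_M) and (b_0, …, b_N) be log-concave sequences of nonnegative real numbers with no internal zeros. Then their convolution (c_0, …, c_{M+N}), defined by c_i = Σ_k a_k b_{i−k} (the sum over all k with 0 ≤ k ≤ M and 0 ≤ i−k ≤ N), is a log-concave sequence of nonnegative real numbers with no internal zeros. -/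
/-- The convolution of the finite sequences `a 0, …, a M` and `b 0, …, b N`:
`c i = ∑_k a k * b (i - k)`, the sum over all `k` with `0 ≤ k ≤ M` and `0 ≤ i - k ≤ N`. -/
noncomputable def seqConv (a : ℕ → ℝ) (M : ℕ) (b : ℕ → ℝ) (N : ℕ) : ℕ → ℝ :=
  fun i => ∑ k ∈ (Finset.range (M + 1)).filter (fun k => k ≤ i ∧ i - k ≤ N),
    a k * b (i - k)

namespace LCAux

/-- Zero-extension of a finite sequence to `ℤ`. -/
noncomputable def ext (a : ℕ → ℝ) (M : ℕ) : ℤ → ℝ :=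
  fun k => if 0 ≤ k ∧ k ≤ (M : ℤ) then a k.toNat else 0

lemma ext_nonneg (a : ℕ → ℝ) (M : ℕ) (ha0 : ∀ k ≤ M, 0 ≤ a k) (k : ℤ) :
    0 ≤ ext a M k := by
  unfold ext; split
  · next h => exact ha0 k.toNat (by omega)
  · exact le_refl 0

lemma ext_eq_zero (a : ℕ → ℝ) (M : ℕ) {k : ℤ} (h : k < 0 ∨ (M : ℤ) < k) :
    ext a M k = 0 := by
  unfold ext; rw [if_neg (by omega)]

lemma ext_ne_imp (a : ℕ → ℝ) (M : ℕ) {k : ℤ} (h : ext a M k ≠ 0) :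
    0 ≤ k ∧ k ≤ (M : ℤ) := by
  by_contra hc
  exact h (ext_eq_zero a M (by omega))

lemma ext_eq (a : ℕ → ℝ) (M : ℕ) {k : ℤ} (h1 : 0 ≤ k) (h2 : k ≤ (M : ℤ)) :
    ext a M k = a k.toNat := by
  unfold ext; rw [if_pos ⟨h1, h2⟩]

/-- Zero-extension of a log-concave sequence is log-concave on all of ℤ. -/
lemma ext_lc (a : ℕ → ℝ) (M : ℕ) (ha0 : ∀ k ≤ M, 0 ≤ a k)
    (ha : ∀ k : ℕ, 0 < k → k < M → a (k - 1) * a (k + 1) ≤ a k ^ 2) (k : ℤ) :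
    ext a M (k - 1) * ext a M (k + 1) ≤ ext a M k ^ 2 := by
  by_cases h1 : ext a M (k - 1) = 0
  · rw [h1, zero_mul]; positivity
  by_cases h2 : ext a M (k + 1) = 0
  · rw [h2, mul_zero]; positivity
  have hk1 := ext_ne_imp a M h1
  have hk2 := ext_ne_imp a M h2
  have hb1 : (0:ℤ) ≤ k - 1 := hk1.1
  have hb2 : k + 1 ≤ (M:ℤ) := hk2.2
  rw [ext_eq a M (by omega) (by omega), ext_eq a M (by omega) (by omega),
    ext_eq a M (by omega) (by omega)]
  have h := ha k.toNat (by omega) (by omega)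
  have e1 : (k - 1).toNat = k.toNat - 1 := by omega
  have e2 : (k + 1).toNat = k.toNat + 1 := by omega
  rw [e1, e2]; exact h

/-- Zero-extension of a no-internal-zeros sequence has no internal zeros on ℤ. -/
lemma ext_niz (a : ℕ → ℝ) (M : ℕ)
    (ha' : ∀ i j l : ℕ, i < j → j < l → l ≤ M → a i ≠ 0 → a l ≠ 0 → a j ≠ 0)
    {i j l : ℤ} (hij : i < j) (hjl : j < l)
    (hi : ext a M i ≠ 0) (hl : ext a M l ≠ 0) : ext a M j ≠ 0 := by
  have h1 := ext_ne_imp a M hi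
  have h2 := ext_ne_imp a M hl
  rw [ext_eq a M (by omega) (by omega)]
  rw [ext_eq a M h1.1 h1.2] at hi
  rw [ext_eq a M h2.1 h2.2] at hl
  exact ha' i.toNat j.toNat l.toNat (by omega) (by omega) (by omega) hi hl

/-- On an interval between two nonzero values, a no-internal-zeros function is nonzero. -/
lemma interval_ne (f : ℤ → ℝ)
    (hf : ∀ i j l : ℤ, i < j → j < l → f i ≠ 0 → f l ≠ 0 → f j ≠ 0)
    {p q r : ℤ} (hpq : p ≤ q) (hqr : q ≤ r) (hp : f p ≠ 0) (hr : f r ≠ 0) :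
    f q ≠ 0 := by
  rcases eq_or_lt_of_le hpq with h | h
  · rwa [← h]
  rcases eq_or_lt_of_le hqr with h' | h'
  · rwa [h']
  exact hf p q r h h' hp hr

/-- The cross inequality for nonnegative log-concave functions with no internal zeros. -/
lemma cross (f : ℤ → ℝ) (h0 : ∀ k, 0 ≤ f k)
    (hlc : ∀ k : ℤ, f (k - 1) * f (k + 1) ≤ f k ^ 2)
    (hniz : ∀ i j l : ℤ, i < j → j < l → f i ≠ 0 → f l ≠ 0 → f j ≠ 0)
    {v w : ℤ} (hvw : v ≤ w) : f (v - 1) * f (w + 1) ≤ f v * f w := by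
  by_cases h1 : f (v - 1) = 0
  · rw [h1, zero_mul]; exact mul_nonneg (h0 v) (h0 w)
  by_cases h2 : f (w + 1) = 0
  · rw [h2, mul_zero]; exact mul_nonneg (h0 v) (h0 w)
  have hpos : ∀ m : ℤ, v - 1 ≤ m → m ≤ w + 1 → 0 < f m := by
    intro m hm hm'
    exact lt_of_le_of_ne (h0 m) (Ne.symm (interval_ne f hniz hm hm' h1 h2))
  clear h1 h2
  have key : ∀ n : ℕ, ∀ v : ℤ, (∀ m : ℤ, v - 1 ≤ m → m ≤ v + n + 1 → 0 < f m) →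
      f (v - 1) * f (v + n + 1) ≤ f v * f (v + n) := by
    intro n
    induction n with
    | zero =>
      intro v _
      have := hlc v
      simpa [sq] using this
    | succ n ih =>
      intro v hp
      have h1 := ih v (fun m hm hm' => hp m hm (by push_cast; omega))
      have h2 := hlc (v + n + 1)
      have e1 : v + (n:ℤ) + 1 - 1 = v + n := by ring
      have e2 : v + (n:ℤ) + 1 + 1 = v + n + 2 := by ring
      rw [e1, e2] at h2
      have p1 : 0 < f (v + n) := hp _ (by omega) (by push_cast; omega)
      have p2 : 0 < f (v + n + 1) := hp _ (by omega) (by push_cast; omega)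
      have p3 : 0 ≤ f (v - 1) := h0 _
      have p4 : 0 ≤ f v := h0 _
      have p5 : 0 ≤ f (v + n + 2) := h0 _
      have goal_eq : v + ((n:ℤ) + 1) + 1 = v + n + 2 := by ring
      have goal_eq2 : v + ((n:ℤ) + 1) = v + n + 1 := by ring
      push_cast
      rw [goal_eq, goal_eq2]
      have hmul : (f (v - 1) * f (v + n + 1)) * (f (v + n) * f (v + n + 2)) ≤
          (f v * f (v + n)) * (f (v + n + 1) ^ 2) :=
        mul_le_mul h1 h2 (mul_nonneg p1.le p5) (mul_nonneg p4 (h0 _))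
      have hh : 0 < f (v + n) * f (v + n + 1) := mul_pos p1 p2
      apply le_of_mul_le_mul_right _ hh
      nlinarith [hmul]
  have ⟨n, hn⟩ : ∃ n : ℕ, w = v + n := ⟨(w - v).toNat, by omega⟩
  subst hn
  exact key n v (fun m hm hm' => hpos m hm hm')

/-- Binet–Cauchy identity. -/
lemma binet (S : Finset ℤ) (f g h e : ℤ → ℝ) :
    2 * ((∑ k ∈ S, f k * g k) * (∑ k ∈ S, h k * e k)
      - (∑ k ∈ S, f k * e k) * (∑ k ∈ S, h k * g k))
    = ∑ k ∈ S, ∑ l ∈ S, (f k * h l - f l * h k) * (g k * e l - g l * e k) := by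
  have expand : ∀ k l : ℤ, (f k * h l - f l * h k) * (g k * e l - g l * e k)
      = (f k * g k) * (h l * e l) - (f k * e k) * (h l * g l)
        - (h k * g k) * (f l * e l) + (h k * e k) * (f l * g l) := by
    intro k l; ring
  symm
  calc ∑ k ∈ S, ∑ l ∈ S, (f k * h l - f l * h k) * (g k * e l - g l * e k)
      = ∑ k ∈ S, ((f k * g k) * (∑ l ∈ S, h l * e l) - (f k * e k) * (∑ l ∈ S, h l * g l)
          - (h k * g k) * (∑ l ∈ S, f l * e l) + (h k * e k) * (∑ l ∈ S, f l * g l)) := by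
        refine Finset.sum_congr rfl fun k _ => ?_
        rw [Finset.sum_congr rfl fun l _ => expand k l]
        rw [Finset.sum_add_distrib, Finset.sum_sub_distrib, Finset.sum_sub_distrib,
          ← Finset.mul_sum, ← Finset.mul_sum, ← Finset.mul_sum, ← Finset.mul_sum]
    _ = 2 * ((∑ k ∈ S, f k * g k) * (∑ k ∈ S, h k * e k)
        - (∑ k ∈ S, f k * e k) * (∑ k ∈ S, h k * g k)) := by
        rw [Finset.sum_add_distrib, Finset.sum_sub_distrib, Finset.sum_sub_distrib,
          ← Finset.sum_mul, ← Finset.sum_mul, ← Finset.sum_mul, ← Finset.sum_mul]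
        ring

/-- Convolution over ℤ with a slightly enlarged index set. -/
noncomputable def zconv (a : ℕ → ℝ) (M : ℕ) (b : ℕ → ℝ) (N : ℕ) : ℤ → ℝ :=
  fun i => ∑ k ∈ Finset.Icc (-1 : ℤ) ((M : ℤ) + 1), ext a M k * ext b N (i - k)

/-- Shift lemma: summing `ext a M (k-1) * g k` equals summing `ext a M k * g (k+1)`. -/
lemma shift_sum (a : ℕ → ℝ) (M : ℕ) (g : ℤ → ℝ) :
    ∑ k ∈ Finset.Icc (-1 : ℤ) ((M : ℤ) + 1), ext a M (k - 1) * g k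
    = ∑ k ∈ Finset.Icc (-1 : ℤ) ((M : ℤ) + 1), ext a M k * g (k + 1) := by
  have h1 : ∑ k ∈ Finset.Icc (-1 : ℤ) ((M : ℤ) + 1), ext a M (k - 1) * g k
      = ∑ k ∈ Finset.Icc (-2 : ℤ) ((M : ℤ)), ext a M k * g (k + 1) := by
    apply Finset.sum_nbij' (fun k => k - 1) (fun k => k + 1)
    · intro k hk; simp only [Finset.mem_Icc] at *; omega
    · intro k hk; simp only [Finset.mem_Icc] at *; omega
    · intro k _; ring
    · intro k _; ring
    · intro k _; rw [sub_add_cancel]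
  rw [h1]
  have h2 : ∑ k ∈ Finset.Icc (-2 : ℤ) ((M : ℤ)), ext a M k * g (k + 1)
      = ∑ k ∈ Finset.Icc (-2 : ℤ) ((M : ℤ) + 1), ext a M k * g (k + 1) := by
    apply Finset.sum_subset
    · intro k hk; simp only [Finset.mem_Icc] at *; omega
    · intro k hk hk'
      simp only [Finset.mem_Icc] at hk hk'
      rw [ext_eq_zero a M (by omega), zero_mul]
  have h3 : ∑ k ∈ Finset.Icc (-1 : ℤ) ((M : ℤ) + 1), ext a M k * g (k + 1)
      = ∑ k ∈ Finset.Icc (-2 : ℤ) ((M : ℤ) + 1), ext a M k * g (k + 1) := by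
    apply Finset.sum_subset
    · intro k hk; simp only [Finset.mem_Icc] at *; omega
    · intro k hk hk'
      simp only [Finset.mem_Icc] at hk hk'
      rw [ext_eq_zero a M (by omega), zero_mul]
  rw [h2, ← h3]

lemma zconv_lc (a b : ℕ → ℝ) (M N : ℕ)
    (ha0 : ∀ k ≤ M, 0 ≤ a k) (hb0 : ∀ k ≤ N, 0 ≤ b k)
    (ha : ∀ k : ℕ, 0 < k → k < M → a (k - 1) * a (k + 1) ≤ a k ^ 2)
    (hb : ∀ k : ℕ, 0 < k → k < N → b (k - 1) * b (k + 1) ≤ b k ^ 2)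
    (ha' : ∀ i j l : ℕ, i < j → j < l → l ≤ M → a i ≠ 0 → a l ≠ 0 → a j ≠ 0)
    (hb' : ∀ i j l : ℕ, i < j → j < l → l ≤ N → b i ≠ 0 → b l ≠ 0 → b j ≠ 0)
    (i : ℤ) :
    zconv a M b N (i - 1) * zconv a M b N (i + 1) ≤ zconv a M b N i ^ 2 := by
  set S := Finset.Icc (-1 : ℤ) ((M : ℤ) + 1) with hS
  set A := ext a M with hA
  set B := ext b N with hB
  -- the four sequences
  set f : ℤ → ℝ := fun k => A k with hf
  set g : ℤ → ℝ := fun k => B (i - k) with hg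
  set h : ℤ → ℝ := fun k => A (k - 1) with hh
  set e : ℤ → ℝ := fun k => B (i + 1 - k) with he
  have hfg : ∑ k ∈ S, f k * g k = zconv a M b N i := rfl
  have hfe : ∑ k ∈ S, f k * e k = zconv a M b N (i + 1) := rfl
  have hhg : ∑ k ∈ S, h k * g k = zconv a M b N (i - 1) := by
    rw [hS, hh, hg]
    rw [shift_sum a M (fun k => B (i - k))]
    apply Finset.sum_congr rfl; intro k _
    congr 1
    rw [hB]; congr 1; ring
  have hhe : ∑ k ∈ S, h k * e k = zconv a M b N i := by
    rw [hS, hh, he]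
    rw [shift_sum a M (fun k => B (i + 1 - k))]
    apply Finset.sum_congr rfl; intro k _
    congr 1
    rw [hB]; congr 1; ring
  have hbinet := binet S f g h e
  rw [hfg, hfe, hhg, hhe] at hbinet
  -- each term of the double sum is nonnegative
  have hA0 : ∀ k, 0 ≤ A k := ext_nonneg a M ha0
  have hB0 : ∀ k, 0 ≤ B k := ext_nonneg b N hb0
  have hAlc : ∀ k : ℤ, A (k - 1) * A (k + 1) ≤ A k ^ 2 := ext_lc a M ha0 ha
  have hBlc : ∀ k : ℤ, B (k - 1) * B (k + 1) ≤ B k ^ 2 := ext_lc b N hb0 hb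
  have hAniz : ∀ p q r : ℤ, p < q → q < r → A p ≠ 0 → A r ≠ 0 → A q ≠ 0 :=
    fun p q r h1 h2 => ext_niz a M ha' h1 h2
  have hBniz : ∀ p q r : ℤ, p < q → q < r → B p ≠ 0 → B r ≠ 0 → B q ≠ 0 :=
    fun p q r h1 h2 => ext_niz b N hb' h1 h2
  have hterm : ∀ k l : ℤ, k < l →
      0 ≤ (f k * h l - f l * h k) * (g k * e l - g l * e k) := by
    intro k l hkl
    apply mul_nonneg
    · -- A k * A (l-1) - A l * A (k-1) ≥ 0
      rw [hf, hh]
      have := cross A hA0 hAlc hAniz (v := k) (w := l - 1) (by omega)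
      have e1 : l - 1 + 1 = l := by ring
      rw [e1] at this
      nlinarith [this]
    · -- B (i-k) * B (i+1-l) - B (i-l) * B (i+1-k) ≥ 0
      rw [hg, he]
      have := cross B hB0 hBlc hBniz (v := i + 1 - l) (w := i - k) (by omega)
      have e1 : i + 1 - l - 1 = i - l := by ring
      have e2 : i - k + 1 = i + 1 - k := by ring
      rw [e1, e2] at this
      nlinarith [this]
  have hdouble : 0 ≤ ∑ k ∈ S, ∑ l ∈ S, (f k * h l - f l * h k) * (g k * e l - g l * e k) := by
    apply Finset.sum_nonneg; intro k _
    apply Finset.sum_nonneg; intro l _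
    rcases lt_trichotomy k l with hkl | hkl | hkl
    · exact hterm k l hkl
    · subst hkl; simp
    · have := hterm l k hkl
      nlinarith [this]
  nlinarith [hbinet, hdouble]

lemma seqConv_eq_zconv (a b : ℕ → ℝ) (M N : ℕ) (i : ℕ) :
    seqConv a M b N i = zconv a M b N (i : ℤ) := by
  unfold zconv
  rw [← Finset.sum_filter_of_ne (p := fun k =>
      0 ≤ k ∧ k ≤ (M : ℤ) ∧ k ≤ (i : ℤ) ∧ (i : ℤ) - k ≤ (N : ℤ))]
  · symm
    apply Finset.sum_nbij' (fun k : ℤ => k.toNat) (fun k : ℕ => (k : ℤ))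
    · intro k hk
      simp only [Finset.mem_filter, Finset.mem_Icc, Finset.mem_range] at *
      omega
    · intro k hk
      simp only [Finset.mem_filter, Finset.mem_Icc, Finset.mem_range] at *
      omega
    · intro k hk
      simp only [Finset.mem_filter, Finset.mem_Icc] at hk
      omega
    · intro k hk; simp
    · intro k hk
      simp only [Finset.mem_filter, Finset.mem_Icc] at hk
      rw [ext_eq a M hk.2.1 hk.2.2.1, ext_eq b N (by omega) (by omega)]
      congr 2
      omega
  · intro k hk hne
    simp only [Finset.mem_Icc] at hk
    have h1 : 0 ≤ k ∧ k ≤ (M : ℤ) := by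
      by_contra hc
      exact hne (by rw [ext_eq_zero a M (by omega), zero_mul])
    have h2 : 0 ≤ (i : ℤ) - k ∧ (i : ℤ) - k ≤ (N : ℤ) := by
      by_contra hc
      exact hne (by rw [ext_eq_zero b N (by omega), mul_zero])
    exact ⟨h1.1, h1.2, by omega, h2.2⟩

lemma zconv_pos_of_ne (a b : ℕ → ℝ) (M N : ℕ)
    (ha0 : ∀ k ≤ M, 0 ≤ a k) (hb0 : ∀ k ≤ N, 0 ≤ b k)
    {i k : ℤ} (hk1 : ext a M k ≠ 0) (hk2 : ext b N (i - k) ≠ 0) :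
    0 < zconv a M b N i := by
  have hkS : k ∈ Finset.Icc (-1 : ℤ) ((M : ℤ) + 1) := by
    have := ext_ne_imp a M hk1
    simp only [Finset.mem_Icc]; omega
  apply Finset.sum_pos'
  · intro l _
    exact mul_nonneg (ext_nonneg a M ha0 l) (ext_nonneg b N hb0 _)
  · refine ⟨k, hkS, ?_⟩
    have h1 : 0 < ext a M k :=
      lt_of_le_of_ne (ext_nonneg a M ha0 k) (Ne.symm hk1)
    have h2 : 0 < ext b N (i - k) :=
      lt_of_le_of_ne (ext_nonneg b N hb0 _) (Ne.symm hk2)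
    exact mul_pos h1 h2

lemma zconv_niz (a b : ℕ → ℝ) (M N : ℕ)
    (ha0 : ∀ k ≤ M, 0 ≤ a k) (hb0 : ∀ k ≤ N, 0 ≤ b k)
    (ha' : ∀ i j l : ℕ, i < j → j < l → l ≤ M → a i ≠ 0 → a l ≠ 0 → a j ≠ 0)
    (hb' : ∀ i j l : ℕ, i < j → j < l → l ≤ N → b i ≠ 0 → b l ≠ 0 → b j ≠ 0)
    {i j l : ℤ} (hij : i ≤ j) (hjl : j ≤ l)
    (hi : zconv a M b N i ≠ 0) (hl : zconv a M b N l ≠ 0) :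
    zconv a M b N j ≠ 0 := by
  obtain ⟨k₁, _, hk1⟩ := Finset.exists_ne_zero_of_sum_ne_zero hi
  obtain ⟨k₂, _, hk2⟩ := Finset.exists_ne_zero_of_sum_ne_zero hl
  have hA1 : ext a M k₁ ≠ 0 := fun h => hk1 (by rw [h, zero_mul])
  have hB1 : ext b N (i - k₁) ≠ 0 := fun h => hk1 (by rw [h, mul_zero])
  have hA2 : ext a M k₂ ≠ 0 := fun h => hk2 (by rw [h, zero_mul])
  have hB2 : ext b N (l - k₂) ≠ 0 := fun h => hk2 (by rw [h, mul_zero])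
  set k : ℤ := max (min k₁ k₂) (j - max (i - k₁) (l - k₂)) with hk
  have hAniz : ∀ p q r : ℤ, p < q → q < r →
      ext a M p ≠ 0 → ext a M r ≠ 0 → ext a M q ≠ 0 :=
    fun p q r h1 h2 => ext_niz a M ha' h1 h2
  have hBniz : ∀ p q r : ℤ, p < q → q < r →
      ext b N p ≠ 0 → ext b N r ≠ 0 → ext b N q ≠ 0 :=
    fun p q r h1 h2 => ext_niz b N hb' h1 h2
  have hminA : ext a M (min k₁ k₂) ≠ 0 := by
    rcases le_total k₁ k₂ with h | h
    · rwa [min_eq_left h]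
    · rwa [min_eq_right h]
  have hmaxA : ext a M (max k₁ k₂) ≠ 0 := by
    rcases le_total k₁ k₂ with h | h
    · rwa [max_eq_right h]
    · rwa [max_eq_left h]
  have hminB : ext b N (min (i - k₁) (l - k₂)) ≠ 0 := by
    rcases le_total (i - k₁) (l - k₂) with h | h
    · rwa [min_eq_left h]
    · rwa [min_eq_right h]
  have hmaxB : ext b N (max (i - k₁) (l - k₂)) ≠ 0 := by
    rcases le_total (i - k₁) (l - k₂) with h | h
    · rwa [max_eq_right h]
    · rwa [max_eq_left h]
  have hAk : ext a M k ≠ 0 := by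
    apply interval_ne (ext a M) hAniz (p := min k₁ k₂) (r := max k₁ k₂)
      (by omega) (by omega) hminA hmaxA
  have hBk : ext b N (j - k) ≠ 0 := by
    apply interval_ne (ext b N) hBniz
      (p := min (i - k₁) (l - k₂)) (r := max (i - k₁) (l - k₂))
      (by omega) (by omega) hminB hmaxB
  exact (zconv_pos_of_ne a b M N ha0 hb0 hAk hBk).ne'

end LCAux

/-- The convolution of two nonnegative log-concave sequences with no internal zeros is a
nonnegative log-concave sequence with no internal zeros. -/
theorem logConcave_conv
    (a b : ℕ → ℝ) (M N : ℕ)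
    (ha0 : ∀ k ≤ M, 0 ≤ a k) (hb0 : ∀ k ≤ N, 0 ≤ b k)
    (ha : IsLogConcave a M) (hb : IsLogConcave b N)
    (ha' : HasNoInternalZeros a M) (hb' : HasNoInternalZeros b N) :
    (∀ i ≤ M + N, 0 ≤ seqConv a M b N i) ∧
      IsLogConcave (seqConv a M b N) (M + N) ∧
      HasNoInternalZeros (seqConv a M b N) (M + N) := by
  refine ⟨?_, ?_, ?_⟩
  · intro i _
    apply Finset.sum_nonneg
    intro k hk
    simp only [Finset.mem_filter, Finset.mem_range] at hk
    exact mul_nonneg (ha0 k (by omega)) (hb0 _ (by omega))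
  · intro k hk _
    rw [LCAux.seqConv_eq_zconv, LCAux.seqConv_eq_zconv, LCAux.seqConv_eq_zconv]
    have h := LCAux.zconv_lc a b M N ha0 hb0 ha hb ha' hb' (k : ℤ)
    have e1 : ((k - 1 : ℕ) : ℤ) = (k : ℤ) - 1 := by omega
    have e2 : ((k + 1 : ℕ) : ℤ) = (k : ℤ) + 1 := by push_cast; ring
    rw [e1, e2]
    exact h
  · intro i j l hij hjl _ hi hl
    rw [LCAux.seqConv_eq_zconv] at hi hl ⊢
    exact LCAux.zconv_niz a b M N ha0 hb0 ha' hb'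
      (by exact_mod_cast hij.le) (by exact_mod_cast hjl.le) hi hl
end
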